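/- Let D ≥ 2k, k ≥ 1 be integers and 0 < ε ≤ 1/3 such that (1+ε)D is an integer. Then Σ_{j=0}^k C((1+ε)D, j) ≤ 2^{εD − ε²k/3} · Σ_{j=0}^k C(D, j). -/

import Mathlib

open Finset Real

theorem log_quad (x : ℝ) (h0 : 0 ≤ x) (h1 : x ≤ 2/3) : Real.log (1+x) ≤ x - x^2/4 := by
  have hpos : (0:ℝ) < 1 + x := by linarith
  rw [Real.log_le_iff_le_exp hpos]
  obtain ⟨s, hs⟩ : ∃ s : ℝ, s = x - x^2/4 := ⟨_, rfl⟩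
  rw [← hs]
  have hs0 : 0 ≤ s := by rw [hs]; nlinarith
  have h4 : 1 + s/4 ≤ Real.exp (s/4) := by have := Real.add_one_le_exp (s/4); linarith
  have hq : (1 + s/4)^4 ≤ (Real.exp (s/4))^4 := by
    apply pow_le_pow_left₀ (by linarith) h4
  have he : (Real.exp (s/4))^4 = Real.exp s := by
    rw [← Real.exp_nat_mul]; ring_nf
  rw [he] at hq
  refine le_trans ?_ hq
  have hx1 : (1+s/4)^4 ≥ 1 + s + (3/8)*s^2 := by nlinarith [pow_nonneg hs0 3, pow_nonneg hs0 4, sq_nonneg s]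
  have hs5 : s ≥ 5/6 * x := by rw [hs]; nlinarith
  have hsq : s^2 ≥ 25/36 * x^2 := by nlinarith [mul_nonneg h0 h0]
  nlinarith

theorem harm_bound (D k : ℕ) (hk : 1 ≤ k) (hkD : 2 * k ≤ D) :
    ∑ i ∈ Finset.range k, 1 / ((D:ℝ) - i) ≤ Real.log 2 := by
  have hDk : (k:ℝ) ≤ (D:ℝ) / 2 := by
    have : ((2*k : ℕ) : ℝ) ≤ ((D:ℕ) : ℝ) := Nat.cast_le.2 hkD
    push_cast at this; linarith
  have hD2 : (2:ℝ) ≤ (D:ℝ) := by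
    have : (1:ℝ) ≤ (k:ℝ) := by exact_mod_cast hk
    linarith
  have key : ∀ i ∈ Finset.range k,
      1 / ((D:ℝ) - i) ≤ Real.log ((D:ℝ) - i) - Real.log ((D:ℝ) - (i+1:ℕ)) := by
    intro i hi
    have hik : (i:ℝ) < k := by exact_mod_cast Finset.mem_range.1 hi
    have h1 : (0:ℝ) < (D:ℝ) - (i+1) := by linarith
    have h2 : (0:ℝ) < (D:ℝ) - i := by linarith
    have hlog : Real.log (((D:ℝ) - (i+1)) / ((D:ℝ) - i)) ≤ ((D:ℝ) - (i+1)) / ((D:ℝ) - i) - 1 :=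
      Real.log_le_sub_one_of_pos (by positivity)
    rw [Real.log_div (by linarith) (by linarith)] at hlog
    have : ((D:ℝ) - (i+1)) / ((D:ℝ) - i) - 1 = -(1 / ((D:ℝ) - i)) := by
      field_simp
      ring
    rw [this] at hlog
    push_cast
    linarith
  calc ∑ i ∈ Finset.range k, 1 / ((D:ℝ) - i)
      ≤ ∑ i ∈ Finset.range k, (Real.log ((D:ℝ) - i) - Real.log ((D:ℝ) - (i+1:ℕ))) :=
        Finset.sum_le_sum key
    _ = Real.log ((D:ℝ) - (0:ℕ)) - Real.log ((D:ℝ) - k) :=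
        Finset.sum_range_sub' (fun i => Real.log ((D:ℝ) - i)) k
    _ ≤ Real.log 2 := by
        have hpos : (0:ℝ) < (D:ℝ) - k := by linarith
        rw [Nat.cast_zero, sub_zero, ← Real.log_div (by linarith) (ne_of_gt hpos)]
        apply Real.log_le_log (by positivity)
        rw [div_le_iff₀ hpos]; linarith

theorem choose_cast_prod (n j : ℕ) (hj : j ≤ n) :
    (n.choose j : ℝ) * ((Nat.factorial j : ℕ) : ℝ) = ∏ i ∈ Finset.range j, ((n:ℝ) - i) := by
  have h1 : (n.descFactorial j : ℝ) = ((Nat.factorial j : ℕ) : ℝ) * (n.choose j : ℝ) := by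
    exact_mod_cast congrArg (Nat.cast (R := ℝ)) (Nat.descFactorial_eq_factorial_mul_choose n j)
  have h2 : ((n.descFactorial j : ℕ) : ℝ) = ∏ i ∈ Finset.range j, ((n:ℝ) - i) := by
    rw [Nat.descFactorial_eq_prod_range]
    push_cast
    apply Finset.prod_congr rfl
    intro i hi
    have : i ≤ n := le_trans (le_of_lt (Finset.mem_range.1 hi)) hj
    rw [Nat.cast_sub this]
  rw [mul_comm, ← h1, h2]

/-- Improved growth bound for partial binomial sums: for integers `D ≥ 2k`,
`k ≥ 1`, and `0 < ε ≤ 1/3` with `(1+ε)D` an integer `M`,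
`∑_{j ≤ k} C(M, j) ≤ 2^{εD - ε²k/3} · ∑_{j ≤ k} C(D, j)`. -/
theorem partial_binomial_sum_growth_small_k (D k M : ℕ) (ε : ℝ)
    (hk : 1 ≤ k) (hkD : 2 * k ≤ D) (hε : 0 < ε) (hε' : ε ≤ 1 / 3)
    (hM : (M : ℝ) = (1 + ε) * (D : ℝ)) :
    (∑ j ∈ Finset.range (k + 1), (M.choose j : ℝ)) ≤
      (2 : ℝ) ^ (ε * (D : ℝ) - ε ^ 2 * (k : ℝ) / 3) *
        ∑ j ∈ Finset.range (k + 1), (D.choose j : ℝ) := by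
  have hkR : (1:ℝ) ≤ (k:ℝ) := by exact_mod_cast hk
  have hDk : 2 * (k:ℝ) ≤ (D:ℝ) := by exact_mod_cast hkD
  have hDpos : (0:ℝ) < (D:ℝ) := by linarith
  have hDM : (D:ℝ) ≤ (M:ℝ) := by nlinarith
  have hkDn : k ≤ D := by omega
  have hkM : k ≤ M := by
    have : (k:ℝ) ≤ (M:ℝ) := by linarith
    exact_mod_cast this
  -- the ratio factors
  obtain ⟨r, hr⟩ : ∃ r : ℕ → ℝ, r = fun i : ℕ => ((M:ℝ) - i) / ((D:ℝ) - i) := ⟨_, rfl⟩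
  have hDi : ∀ i < k, (0:ℝ) < (D:ℝ) - i := by
    intro i hi
    have : (i:ℝ) < k := by exact_mod_cast hi
    linarith
  have hr1 : ∀ i < k, 1 ≤ r i := by
    intro i hi
    rw [hr]
    dsimp only
    rw [le_div_iff₀ (hDi i hi)]
    linarith
  have hrpos : ∀ i < k, 0 < r i := fun i hi => lt_of_lt_of_le one_pos (hr1 i hi)
  -- termwise bound via the product up to k
  have hterm : ∀ j ∈ Finset.range (k+1),
      (M.choose j : ℝ) ≤ (∏ i ∈ Finset.range k, r i) * (D.choose j : ℝ) := by
    intro j hj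
    have hjk : j ≤ k := Nat.lt_succ_iff.1 (Finset.mem_range.1 hj)
    have hPD : (0:ℝ) < ∏ i ∈ Finset.range j, ((D:ℝ) - i) := by
      apply Finset.prod_pos
      intro i hi
      exact hDi i (lt_of_lt_of_le (Finset.mem_range.1 hi) hjk)
    have hfac : (0:ℝ) < ((Nat.factorial j : ℕ) : ℝ) := by exact_mod_cast j.factorial_pos
    have hMc := choose_cast_prod M j (le_trans hjk hkM)
    have hDc := choose_cast_prod D j (le_trans hjk hkDn)
    have heq : (M.choose j : ℝ) = (D.choose j : ℝ) * ∏ i ∈ Finset.range j, r i := by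
      have hprod : ∏ i ∈ Finset.range j, r i
          = (∏ i ∈ Finset.range j, ((M:ℝ) - i)) / ∏ i ∈ Finset.range j, ((D:ℝ) - i) := by
        rw [← Finset.prod_div_distrib, hr]
      have hDch : (0:ℝ) < (D.choose j : ℝ) := by
        exact_mod_cast Nat.choose_pos (le_trans hjk hkDn)
      rw [hprod, ← hMc, ← hDc]
      field_simp
    rw [heq]
    have hmono : ∏ i ∈ Finset.range j, r i ≤ ∏ i ∈ Finset.range k, r i := by
      rw [← Finset.prod_range_mul_prod_Ico r hjk]
      have h1le : (1:ℝ) ≤ ∏ i ∈ Finset.Ico j k, r i := by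
        have : ∏ _i ∈ Finset.Ico j k, (1:ℝ) ≤ ∏ i ∈ Finset.Ico j k, r i := by
          apply Finset.prod_le_prod
          · intro i _; norm_num
          · intro i hi; exact hr1 i (Finset.mem_Ico.1 hi).2
        simpa using this
      have hPj : 0 ≤ ∏ i ∈ Finset.range j, r i := by
        apply Finset.prod_nonneg
        intro i hi
        exact le_of_lt (hrpos i (lt_of_lt_of_le (Finset.mem_range.1 hi) hjk))
      nlinarith
    have hDcnn : (0:ℝ) ≤ (D.choose j : ℝ) := by positivity
    nlinarith
  have hsum := Finset.sum_le_sum hterm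
  rw [← Finset.mul_sum] at hsum
  refine le_trans hsum ?_
  have hsumD : (0:ℝ) ≤ ∑ j ∈ Finset.range (k+1), (D.choose j : ℝ) := by
    apply Finset.sum_nonneg; intro i _; positivity
  -- suffices to bound the product by the power of 2
  have hP2 : (∏ i ∈ Finset.range k, r i) ≤ (2:ℝ) ^ (ε * (D:ℝ) - ε ^ 2 * (k:ℝ) / 3) := by
    have hx : ∀ i < k, r i = 1 + ε * (D:ℝ) / ((D:ℝ) - i) := by
      intro i hi
      rw [hr]; dsimp only
      field_simp [ne_of_gt (hDi i hi)]
      rw [hM]; ring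
    -- log of each factor
    have hlog : ∀ i ∈ Finset.range k,
        Real.log (r i) ≤ ε * (D:ℝ) * (1 / ((D:ℝ) - i)) - ε^2/4 := by
      intro i hi
      have hik := Finset.mem_range.1 hi
      have hDipos := hDi i hik
      have hxi0 : 0 ≤ ε * (D:ℝ) / ((D:ℝ) - i) := by positivity
      have hxge : ε ≤ ε * (D:ℝ) / ((D:ℝ) - i) := by
        rw [le_div_iff₀ hDipos]
        have : (0:ℝ) ≤ (i:ℝ) := by positivity
        nlinarith
      have hxle : ε * (D:ℝ) / ((D:ℝ) - i) ≤ 2/3 := by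
        rw [div_le_iff₀ hDipos]
        have hik' : (i:ℝ) ≤ (k:ℝ) - 1 := by
          have : (i:ℝ) + 1 ≤ (k:ℝ) := by exact_mod_cast hik
          linarith
        nlinarith
      have := log_quad (ε * (D:ℝ) / ((D:ℝ) - i)) hxi0 hxle
      rw [hx i hik]
      have hsq : ε^2 ≤ (ε * (D:ℝ) / ((D:ℝ) - i))^2 := by nlinarith
      calc Real.log (1 + ε * (D:ℝ) / ((D:ℝ) - i))
          ≤ ε * (D:ℝ) / ((D:ℝ) - i) - (ε * (D:ℝ) / ((D:ℝ) - i))^2/4 := this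
        _ ≤ ε * (D:ℝ) * (1 / ((D:ℝ) - i)) - ε^2/4 := by
            rw [mul_one_div]; linarith
    have hlogsum : ∑ i ∈ Finset.range k, Real.log (r i)
        ≤ (ε * (D:ℝ) - ε ^ 2 * (k:ℝ) / 3) * Real.log 2 := by
      have h1 : ∑ i ∈ Finset.range k, Real.log (r i)
          ≤ ∑ i ∈ Finset.range k, (ε * (D:ℝ) * (1 / ((D:ℝ) - i)) - ε^2/4) :=
        Finset.sum_le_sum hlog
      rw [Finset.sum_sub_distrib, ← Finset.mul_sum, Finset.sum_const, Finset.card_range, nsmul_eq_mul] at h1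
      have h2 := harm_bound D k hk hkD
      have hl2 : Real.log 2 ≤ 3/4 := by
        have := Real.log_two_lt_d9
        linarith
      have hl2' : (0:ℝ) < Real.log 2 := Real.log_pos (by norm_num)
      have h3 : ε * (D:ℝ) * ∑ i ∈ Finset.range k, 1 / ((D:ℝ) - i) ≤ ε * (D:ℝ) * Real.log 2 := by
        apply mul_le_mul_of_nonneg_left h2 (by positivity)
      have h4 : ε ^ 2 * (k:ℝ) / 3 * Real.log 2 ≤ (k:ℝ) * (ε^2/4) := by
        calc ε ^ 2 * (k:ℝ) / 3 * Real.log 2 ≤ ε ^ 2 * (k:ℝ) / 3 * (3/4) :=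
              mul_le_mul_of_nonneg_left hl2 (by positivity)
          _ = (k:ℝ) * (ε^2/4) := by ring
      have h5 : (ε * (D:ℝ) - ε ^ 2 * (k:ℝ) / 3) * Real.log 2
          = ε * (D:ℝ) * Real.log 2 - ε ^ 2 * (k:ℝ) / 3 * Real.log 2 := by ring
      rw [h5]
      linarith
    have hPeq : ∏ i ∈ Finset.range k, r i = Real.exp (∑ i ∈ Finset.range k, Real.log (r i)) := by
      rw [Real.exp_sum]
      apply Finset.prod_congr rfl
      intro i hi
      rw [Real.exp_log (hrpos i (Finset.mem_range.1 hi))]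
    rw [hPeq, Real.rpow_def_of_pos (by norm_num : (0:ℝ) < 2)]
    apply Real.exp_le_exp.2
    rw [mul_comm]
    exact hlogsum
  exact mul_le_mul_of_nonneg_right hP2 hsumD
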